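/- In the lattice ℤ^20 with Gram matrix G of Table 2, the set of vectors v satisfying ⟨v,h48⟩ = d and ⟨v,v⟩ = 4 is empty for d = 1, 2, 3, and consists of exactly the single vector h48 for d = 4. -/

import Mathlib

noncomputable section

def G : Matrix (Fin 20) (Fin 20) ℤ :=
  Matrix.of ![
    ![-2, 1, 1, 1, 1, 0, 0, 1, 0, 0, 1, 0, 0, 0, 1, 0, 0, 0, 0, 1],
    ![1, -2, 1, 1, 0, 1, 0, 0, 1, 0, 0, 1, 0, 0, 0, 1, 0, 0, 1, 0],
    ![1, 1, -2, 1, 0, 0, 1, 0, 0, 1, 0, 0, 1, 0, 0, 0, 0, 1, 0, 0],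
    ![1, 1, 1, -2, 0, 0, 0, 0, 0, 0, 0, 0, 0, 1, 0, 0, 1, 0, 0, 0],
    ![1, 0, 0, 0, -2, 1, 1, 1, 0, 0, 0, 0, 0, 1, 0, 0, 0, 0, 1, 0],
    ![0, 1, 0, 0, 1, -2, 1, 0, 1, 0, 1, 0, 0, 0, 1, 0, 0, 1, 0, 0],
    ![0, 0, 1, 0, 1, 1, -2, 0, 0, 1, 0, 1, 0, 0, 0, 1, 1, 0, 0, 0],
    ![1, 0, 0, 0, 1, 0, 0, -2, 1, 1, 0, 0, 1, 0, 0, 0, 0, 1, 0, 0],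
    ![0, 1, 0, 0, 0, 1, 0, 1, -2, 1, 0, 0, 0, 1, 0, 0, 1, 0, 0, 0],
    ![0, 0, 1, 0, 0, 0, 1, 1, 1, -2, 1, 0, 0, 0, 1, 0, 0, 0, 0, 1],
    ![1, 0, 0, 0, 0, 1, 0, 0, 0, 1, -2, 1, 1, 1, 0, 0, 1, 0, 0, 0],
    ![0, 1, 0, 0, 0, 0, 1, 0, 0, 0, 1, -2, 1, 0, 1, 0, 0, 1, 0, 1],
    ![0, 0, 1, 0, 0, 0, 0, 1, 0, 0, 1, 1, -2, 0, 0, 1, 0, 0, 1, 0],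
    ![0, 0, 0, 1, 1, 0, 0, 0, 1, 0, 1, 0, 0, -2, 1, 1, 0, 1, 0, 1],
    ![1, 0, 0, 0, 0, 1, 0, 0, 0, 1, 0, 1, 0, 1, -2, 1, 0, 0, 1, 0],
    ![0, 1, 0, 0, 0, 0, 1, 0, 0, 0, 0, 0, 1, 1, 1, -2, 0, 0, 0, 0],
    ![0, 0, 0, 1, 0, 0, 1, 0, 1, 0, 1, 0, 0, 0, 0, 0, -2, 1, 1, 1],
    ![0, 0, 1, 0, 0, 1, 0, 1, 0, 0, 0, 1, 0, 1, 0, 0, 1, -2, 1, 0],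
    ![0, 1, 0, 0, 1, 0, 0, 0, 0, 0, 0, 0, 1, 0, 1, 0, 1, 1, -2, 0],
    ![1, 0, 0, 0, 0, 0, 0, 0, 0, 1, 0, 1, 0, 1, 0, 0, 1, 0, 0, -2]]
def bf (x y : Fin 20 → ℤ) : ℤ := dotProduct x (G.mulVec y)
def h48 : Fin 20 → ℤ := ![1, 1, 1, 1, 0, 0, 0, 0, 0, 0, 0, 0, 0, 0, 0, 0, 0, 0, 0, 0]

lemma hv_expand (v : Fin 20 → ℤ) : v = ![v 0, v 1, v 2, v 3, v 4, v 5, v 6, v 7, v 8, v 9, v 10, v 11, v 12, v 13, v 14, v 15, v 16, v 17, v 18, v 19] := by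
  funext i; fin_cases i <;> rfl

set_option maxHeartbeats 1000000 in
lemma bf_vh (v : Fin 20 → ℤ) : bf v h48 = v 0 + v 1 + v 2 + v 3 + v 4 + v 5 + v 6 + v 7 + v 8 + v 9 + v 10 + v 11 + v 12 + v 13 + v 14 + v 15 + v 16 + v 17 + v 18 + v 19 := by
  conv_lhs => rw [hv_expand v]
  simp [bf, G, h48, Matrix.mulVec, dotProduct, Fin.sum_univ_succ]
  ring

set_option maxHeartbeats 4000000 in
lemma bf_vv (v : Fin 20 → ℤ) : bf v v = (-2)*v 0^2 + (-2)*v 1^2 + (-2)*v 2^2 + (-2)*v 3^2 + (-2)*v 4^2 + (-2)*v 5^2 + (-2)*v 6^2 + (-2)*v 7^2 + (-2)*v 8^2 + (-2)*v 9^2 + (-2)*v 10^2 + (-2)*v 11^2 + (-2)*v 12^2 + (-2)*v 13^2 + (-2)*v 14^2 + (-2)*v 15^2 + (-2)*v 16^2 + (-2)*v 17^2 + (-2)*v 18^2 + (-2)*v 19^2 + 2*v 0*v 1 + 2*v 0*v 2 + 2*v 0*v 3 + 2*v 0*v 4 + 2*v 0*v 7 + 2*v 0*v 10 + 2*v 0*v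 14 + 2*v 0*v 19 + 2*v 1*v 2 + 2*v 1*v 3 + 2*v 1*v 5 + 2*v 1*v 8 + 2*v 1*v 11 + 2*v 1*v 15 + 2*v 1*v 18 + 2*v 2*v 3 + 2*v 2*v 6 + 2*v 2*v 9 + 2*v 2*v 12 + 2*v 2*v 17 + 2*v 3*v 13 + 2*v 3*v 16 + 2*v 4*v 5 + 2*v 4*v 6 + 2*v 4*v 7 + 2*v 4*v 13 + 2*v 4*v 18 + 2*v 5*v 6 + 2*v 5*v 8 + 2*v 5*v 10 + 2*v 5*v 14 + 2*v 5*v 17 + 2*v 6*v 9 + 2*v 6*v 11 + 2*v 6*v 15 + 2*v 6*v 16 + 2*v 7*v 8 + 2*v 7*v 9 + 2*v 7*v 12 + 2*v 7*v 17 + 2*v 8*v 9 + 2*v 8*v 13 + 2*v 8*v 16 + 2*v 9*v 10 + 2*v 9*v 14 + 2*v 9*v 19 + 2*v 10*v 11 + 2*v 10*v 12 + 2*v 10*v 13 + 2*v 10*v 16 + 2*v 11*v 12 + 2*v 11*v 14 + 2*v 11*v 17 + 2*v 11*v 19 + 2*v 12*v 15 + 2*v 12*v 18 + 2*v 13*v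 14 + 2*v 13*v 15 + 2*v 13*v 17 + 2*v 13*v 19 + 2*v 14*v 15 + 2*v 14*v 18 + 2*v 16*v 17 + 2*v 16*v 18 + 2*v 16*v 19 + 2*v 17*v 18 := by
  conv_lhs => rw [hv_expand v]
  simp [bf, G, Matrix.mulVec, dotProduct, Fin.sum_univ_succ]
  ring

set_option maxHeartbeats 1000000 in
lemma key (v : Fin 20 → ℤ) :
    36*((bf v h48)^2 - 4 * bf v v) = 4*((9)*v 0 + (-3)*v 1 + (-3)*v 2 + (-3)*v 3 + (-3)*v 4 + v 5 + v 6 + (-3)*v 7 + v 8 + v 9 + (-3)*v 10 + v 11 + v 12 + v 13 + (-3)*v 14 + v 15 + v 16 + v 17 + v 18 + (-3)*v 19)^2 + 8*((6)*v 1 + (-3)*v 2 + (-3)*v 3 + (-2)*v 5 + v 6 + (-2)*v 8 + v 9 + (-2)*v 11 + v 12 + v 13 + (-2)*v 15 + v 16 + v 17 + (-2)*v 18)^2 + 24*((3)*v 2 + (-3)*v 3 - v 6 - v 9 - v 12 + v 13 + v 16 - v 17)^2 + 8*((6)*v 4 + (-2)*v 5 + (-2)*v 6 + (-3)*v 7 +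 v 8 + v 9 + v 11 + v 12 + (-2)*v 13 + v 15 + v 16 + v 17 + (-2)*v 18)^2 + 1*((16)*v 5 + (-8)*v 6 + (-8)*v 8 + (4)*v 9 + (-6)*v 10 + v 11 + (4)*v 12 + v 13 + (-6)*v 14 + v 15 + (4)*v 16 + (-5)*v 17 + (-2)*v 18 + (3)*v 19)^2 + 3*((8)*v 6 + (-4)*v 9 + (-3)*v 11 + (2)*v 12 + v 13 + (-3)*v 15 + (-2)*v 16 - v 17 + (3)*v 19)^2 + 24*((3)*v 7 - v 8 - v 9 + v 11 - v 12 + v 15 + v 16 - v 17)^2 + 3*((8)*v 8 + (-4)*v 9 + v 11 + (2)*v 12 + (-3)*v 13 + v 15 + (-2)*v 16 - v 17 + (3)*v 19)^2 + 9*((4)*v 9 + (-2)*v 10 + v 11 + v 13 + (-2)*v 14 + v 15 - v 17 + (2)*v 18 - v 19)^2 + 24*((3)*v 10 - v 11 - v 12 - v 13 - v 14 + v 15 - v 16 + v 18)^2 + 3*((8)*v 11 + (-4)*v 12 + (2)*v 13 + (-4)*v 14 + (-2)*v 15 - v 16 + (-3)*v 17 + v 18 + (-3)*v 19)^2 + 9*((4)*v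 12 + (2)*v 13 + (-2)*v 15 + v 16 - v 17 - v 18 - v 19)^2 + 9*((4)*v 13 + (-2)*v 14 - v 16 - v 17 + v 18 - v 19)^2 + 3*((6)*v 14 + (-4)*v 15 + v 16 + (-3)*v 17 - v 18 + (-3)*v 19)^2 + 24*((2)*v 15 + v 16 - v 18)^2 + 36*((2)*v 16 - v 17 - v 19)^2 + 12*((3)*v 17 + (-2)*v 18 - v 19)^2 + 24*((2)*v 18 + v 19)^2 + 72*(v 19)^2 := by
  rw [bf_vh, bf_vv]; ring

lemma sq_eq_zero {s : ℤ} (h : s^2 = 0) : s = 0 :=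
  (pow_eq_zero_iff (by norm_num : (2:ℕ) ≠ 0)).1 h

lemma sum19 (a0 a1 a2 a3 a4 a5 a6 a7 a8 a9 a10 a11 a12 a13 a14 a15 a16 a17 a18 : ℤ) (h0 : 0 ≤ a0) (h1 : 0 ≤ a1) (h2 : 0 ≤ a2) (h3 : 0 ≤ a3) (h4 : 0 ≤ a4) (h5 : 0 ≤ a5) (h6 : 0 ≤ a6) (h7 : 0 ≤ a7) (h8 : 0 ≤ a8) (h9 : 0 ≤ a9) (h10 : 0 ≤ a10) (h11 : 0 ≤ a11) (h12 : 0 ≤ a12) (h13 : 0 ≤ a13) (h14 : 0 ≤ a14) (h15 : 0 ≤ a15) (h16 : 0 ≤ a16) (h17 : 0 ≤ a17) (h18 : 0 ≤ a18)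
    (h : 0 = 4*a0 + 8*a1 + 24*a2 + 8*a3 + 1*a4 + 3*a5 + 24*a6 + 3*a7 + 9*a8 + 24*a9 + 3*a10 + 9*a11 + 9*a12 + 3*a13 + 24*a14 + 36*a15 + 12*a16 + 24*a17 + 72*a18) : a0 = 0 ∧ a1 = 0 ∧ a2 = 0 ∧ a3 = 0 ∧ a4 = 0 ∧ a5 = 0 ∧ a6 = 0 ∧ a7 = 0 ∧ a8 = 0 ∧ a9 = 0 ∧ a10 = 0 ∧ a11 = 0 ∧ a12 = 0 ∧ a13 = 0 ∧ a14 = 0 ∧ a15 = 0 ∧ a16 = 0 ∧ a17 = 0 ∧ a18 = 0 := by omega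

lemma empty_case (v : Fin 20 → ℤ) (d : ℤ) (hd : 0 ≤ 36*(d^2-4*4) → False)
    (h1 : bf v h48 = d) (h2 : bf v v = 4) : False := by
  have hk := key v
  rw [h1, h2] at hk
  have hnn : (0:ℤ) ≤ 36*(d^2 - 4*4) := by rw [hk]; positivity
  exact hd hnn

set_option maxHeartbeats 4000000 in
lemma eq_case (v : Fin 20 → ℤ) (h1 : bf v h48 = 4) (h2 : bf v v = 4) : v = h48 := by
  have hk := key v
  rw [h1, h2] at hk
  have hs := (bf_vh v).symm.trans h1
  obtain ⟨q0, q1, q2, q3, q4, q5, q6, q7, q8, q9, q10, q11, q12, q13, q14, q15, q16, q17, q18⟩ := sum19 ((((9)*v 0 + (-3)*v 1 + (-3)*v 2 + (-3)*v 3 + (-3)*v 4 + v 5 + v 6 + (-3)*v 7 + v 8 + v 9 + (-3)*v 10 + v 11 + v 12 + v 13 + (-3)*v 14 + v 15 + v 16 + v 17 + v 18 + (-3)*v 19))^2) ((((6)*v 1 + (-3)*v 2 + (-3)*v 3 + (-2)*v 5 + v 6 + (-2)*v 8 + v 9 + (-2)*v 11 + v 12 + v 13 + (-2)*v 15 + v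 16 + v 17 + (-2)*v 18))^2) ((((3)*v 2 + (-3)*v 3 - v 6 - v 9 - v 12 + v 13 + v 16 - v 17))^2) ((((6)*v 4 + (-2)*v 5 + (-2)*v 6 + (-3)*v 7 + v 8 + v 9 + v 11 + v 12 + (-2)*v 13 + v 15 + v 16 + v 17 + (-2)*v 18))^2) ((((16)*v 5 + (-8)*v 6 + (-8)*v 8 + (4)*v 9 + (-6)*v 10 + v 11 + (4)*v 12 + v 13 + (-6)*v 14 + v 15 + (4)*v 16 + (-5)*v 17 + (-2)*v 18 + (3)*v 19))^2) ((((8)*v 6 + (-4)*v 9 + (-3)*v 11 + (2)*v 12 + v 13 + (-3)*v 15 + (-2)*v 16 - v 17 + (3)*v 19))^2) ((((3)*v 7 - v 8 - v 9 + v 11 - v 12 + v 15 + v 16 - v 17))^2) ((((8)*v 8 + (-4)*v 9 + v 11 + (2)*v 12 + (-3)*v 13 + v 15 + (-2)*v 16 - v 17 + (3)*v 19))^2) ((((4)*v 9 + (-2)*v 10 + v 11 + v 13 + (-2)*v 14 + v 15 - v 17 + (2)*v 18 - v 19))^2) ((((3)*v 10 - v 11 - v 12 - v 13 - v 14 + v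 15 - v 16 + v 18))^2) ((((8)*v 11 + (-4)*v 12 + (2)*v 13 + (-4)*v 14 + (-2)*v 15 - v 16 + (-3)*v 17 + v 18 + (-3)*v 19))^2) ((((4)*v 12 + (2)*v 13 + (-2)*v 15 + v 16 - v 17 - v 18 - v 19))^2) ((((4)*v 13 + (-2)*v 14 - v 16 - v 17 + v 18 - v 19))^2) ((((6)*v 14 + (-4)*v 15 + v 16 + (-3)*v 17 - v 18 + (-3)*v 19))^2) ((((2)*v 15 + v 16 - v 18))^2) ((((2)*v 16 - v 17 - v 19))^2) ((((3)*v 17 + (-2)*v 18 - v 19))^2) ((((2)*v 18 + v 19))^2) (((v 19))^2) (sq_nonneg _) (sq_nonneg _) (sq_nonneg _) (sq_nonneg _) (sq_nonneg _) (sq_nonneg _) (sq_nonneg _) (sq_nonneg _) (sq_nonneg _) (sq_nonneg _) (sq_nonneg _) (sq_nonneg _) (sq_nonneg _) (sq_nonneg _) (sq_nonneg _) (sq_nonneg _) (sq_nonneg _) (sq_nonneg _) (sq_nonneg _) (by rw [← hk]; norm_num)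
  have z0 : ((9)*v 0 + (-3)*v 1 + (-3)*v 2 + (-3)*v 3 + (-3)*v 4 + v 5 + v 6 + (-3)*v 7 + v 8 + v 9 + (-3)*v 10 + v 11 + v 12 + v 13 + (-3)*v 14 + v 15 + v 16 + v 17 + v 18 + (-3)*v 19) = 0 := sq_eq_zero q0
  have z1 : ((6)*v 1 + (-3)*v 2 + (-3)*v 3 + (-2)*v 5 + v 6 + (-2)*v 8 + v 9 + (-2)*v 11 + v 12 + v 13 + (-2)*v 15 + v 16 + v 17 + (-2)*v 18) = 0 := sq_eq_zero q1
  have z2 : ((3)*v 2 + (-3)*v 3 - v 6 - v 9 - v 12 + v 13 + v 16 - v 17) = 0 := sq_eq_zero q2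
  have z3 : ((6)*v 4 + (-2)*v 5 + (-2)*v 6 + (-3)*v 7 + v 8 + v 9 + v 11 + v 12 + (-2)*v 13 + v 15 + v 16 + v 17 + (-2)*v 18) = 0 := sq_eq_zero q3
  have z4 : ((16)*v 5 + (-8)*v 6 + (-8)*v 8 + (4)*v 9 + (-6)*v 10 + v 11 + (4)*v 12 + v 13 + (-6)*v 14 + v 15 + (4)*v 16 + (-5)*v 17 + (-2)*v 18 + (3)*v 19) = 0 := sq_eq_zero q4
  have z5 : ((8)*v 6 + (-4)*v 9 + (-3)*v 11 + (2)*v 12 + v 13 + (-3)*v 15 + (-2)*v 16 - v 17 + (3)*v 19) = 0 := sq_eq_zero q5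
  have z6 : ((3)*v 7 - v 8 - v 9 + v 11 - v 12 + v 15 + v 16 - v 17) = 0 := sq_eq_zero q6
  have z7 : ((8)*v 8 + (-4)*v 9 + v 11 + (2)*v 12 + (-3)*v 13 + v 15 + (-2)*v 16 - v 17 + (3)*v 19) = 0 := sq_eq_zero q7
  have z8 : ((4)*v 9 + (-2)*v 10 + v 11 + v 13 + (-2)*v 14 + v 15 - v 17 + (2)*v 18 - v 19) = 0 := sq_eq_zero q8
  have z9 : ((3)*v 10 - v 11 - v 12 - v 13 - v 14 + v 15 - v 16 + v 18) = 0 := sq_eq_zero q9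
  have z10 : ((8)*v 11 + (-4)*v 12 + (2)*v 13 + (-4)*v 14 + (-2)*v 15 - v 16 + (-3)*v 17 + v 18 + (-3)*v 19) = 0 := sq_eq_zero q10
  have z11 : ((4)*v 12 + (2)*v 13 + (-2)*v 15 + v 16 - v 17 - v 18 - v 19) = 0 := sq_eq_zero q11
  have z12 : ((4)*v 13 + (-2)*v 14 - v 16 - v 17 + v 18 - v 19) = 0 := sq_eq_zero q12
  have z13 : ((6)*v 14 + (-4)*v 15 + v 16 + (-3)*v 17 - v 18 + (-3)*v 19) = 0 := sq_eq_zero q13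
  have z14 : ((2)*v 15 + v 16 - v 18) = 0 := sq_eq_zero q14
  have z15 : ((2)*v 16 - v 17 - v 19) = 0 := sq_eq_zero q15
  have z16 : ((3)*v 17 + (-2)*v 18 - v 19) = 0 := sq_eq_zero q16
  have z17 : ((2)*v 18 + v 19) = 0 := sq_eq_zero q17
  have z18 : (v 19) = 0 := sq_eq_zero q18
  clear hk h1 h2
  clear q0 q1 q2 q3 q4 q5 q6 q7 q8 q9 q10 q11 q12 q13 q14 q15 q16 q17 q18
  have e0 : v 0 = 1 := by linarith
  have e1 : v 1 = 1 := by linarith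
  have e2 : v 2 = 1 := by linarith
  have e3 : v 3 = 1 := by linarith
  have e4 : v 4 = 0 := by linarith
  have e5 : v 5 = 0 := by linarith
  have e6 : v 6 = 0 := by linarith
  have e7 : v 7 = 0 := by linarith
  have e8 : v 8 = 0 := by linarith
  have e9 : v 9 = 0 := by linarith
  have e10 : v 10 = 0 := by linarith
  have e11 : v 11 = 0 := by linarith
  have e12 : v 12 = 0 := by linarith
  have e13 : v 13 = 0 := by linarith
  have e14 : v 14 = 0 := by linarith
  have e15 : v 15 = 0 := by linarith
  have e16 : v 16 = 0 := by linarith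
  have e17 : v 17 = 0 := by linarith
  have e18 : v 18 = 0 := by linarith
  have e19 : v 19 = 0 := by linarith
  funext i
  fin_cases i
  exacts [e0, e1, e2, e3, e4, e5, e6, e7, e8, e9, e10, e11, e12, e13, e14, e15, e16, e17, e18, e19]

theorem H_d_small :
    ({v : Fin 20 → ℤ | bf v h48 = 1 ∧ bf v v = 4} = ∅) ∧
    ({v : Fin 20 → ℤ | bf v h48 = 2 ∧ bf v v = 4} = ∅) ∧
    ({v : Fin 20 → ℤ | bf v h48 = 3 ∧ bf v v = 4} = ∅) ∧
    ({v : Fin 20 → ℤ | bf v h48 = 4 ∧ bf v v = 4} = {h48}) := by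
  refine ⟨?_, ?_, ?_, ?_⟩
  · ext v; simp only [Set.mem_setOf_eq, Set.mem_empty_iff_false, iff_false, not_and]
    intro h1 h2; exact (empty_case v 1 (by norm_num) h1 h2).elim
  · ext v; simp only [Set.mem_setOf_eq, Set.mem_empty_iff_false, iff_false, not_and]
    intro h1 h2; exact (empty_case v 2 (by norm_num) h1 h2).elim
  · ext v; simp only [Set.mem_setOf_eq, Set.mem_empty_iff_false, iff_false, not_and]
    intro h1 h2; exact (empty_case v 3 (by norm_num) h1 h2).elim
  · ext v; simp only [Set.mem_setOf_eq, Set.mem_singleton_iff]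
    constructor
    · rintro ⟨h1, h2⟩; exact eq_case v h1 h2
    · rintro rfl
      refine ⟨?_, ?_⟩
      · rw [bf_vh]; decide
      · rw [bf_vv]; decide
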